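/- arXiv:2603.28468 — 2 statements merged into one kernel-verified Lean document; each statement's English description precedes it below -/
import Mathlib

section
/- Let d ∈ {1,2,3,7,11} and suppose z = [a₀; a₁, a₂, …] with all a_n ∈ ℤ[ω_d] is a geodesic continued fraction expansion (finite or infinite). Then for every n ≥ 1 for which the relevant partial quotients exist: (i) |a_n| ≠ 1; (ii) if |a_n| = √2 then a_{n+1} ≠ −conj(a_n); (iii) if a_n = 2ζ for a unit ζ of ℤ[ω_d] then a_{n+1} ≠ −2·conj(ζ). -/
/-- `ω_d`: the generator of the ring of integers of `ℚ(√(-d))`. -/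
noncomputable def omegaD (d : ℕ) : ℂ :=
  if d % 4 = 3 then (1 + Complex.I * Real.sqrt d) / 2 else Complex.I * Real.sqrt d

/-- The ring of integers `ℤ[ω_d]` of `ℚ(√(-d))`, as a subset of `ℂ`. -/
def ringInt (d : ℕ) : Set ℂ := {z | ∃ a b : ℤ, z = (a : ℂ) + (b : ℂ) * omegaD d}

/-- `p` and `q` are coprime in `ℤ[ω_d]`. -/
def CoprimeIn (d : ℕ) (p q : ℂ) : Prop :=
  ∃ u v : ℂ, u ∈ ringInt d ∧ v ∈ ringInt d ∧ u * p + v * q = 1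

/-- `x` is an element of the field `ℚ(√(-d)) ⊆ ℂ`. -/
def inK (d : ℕ) (x : ℂ) : Prop :=
  ∃ p q : ℂ, p ∈ ringInt d ∧ q ∈ ringInt d ∧ q ≠ 0 ∧ x = p / q

/-- The point `p/q` of `ℂ ∪ {∞}`, with `p/0 = ∞`. -/
noncomputable def divC (p q : ℂ) : OnePoint ℂ :=
  if q = 0 then OnePoint.infty else ((p / q : ℂ) : OnePoint ℂ)

/-- Two points of `ℚ(√(-d)) ∪ {∞}` are Farey neighbours (joined by an edge of
the Farey graph `E_d`) if they have coprime representations `p₁/q₁`, `p₂/q₂`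
with `|p₁q₂ − p₂q₁| = 1`. -/
def FareyAdj (d : ℕ) (x y : OnePoint ℂ) : Prop :=
  ∃ p₁ q₁ p₂ q₂ : ℂ, p₁ ∈ ringInt d ∧ q₁ ∈ ringInt d ∧ p₂ ∈ ringInt d ∧ q₂ ∈ ringInt d ∧
    CoprimeIn d p₁ q₁ ∧ CoprimeIn d p₂ q₂ ∧ x = divC p₁ q₁ ∧ y = divC p₂ q₂ ∧
    ‖p₁ * q₂ - p₂ * q₁‖ = 1

/-- `f 0 → f 1 → ⋯ → f n` is a walk (of length `n`) in the Farey graph `E_d`. -/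
def IsWalk (d n : ℕ) (f : ℕ → OnePoint ℂ) : Prop := ∀ k, k < n → FareyAdj d (f k) (f (k + 1))

/-- `f 0 → ⋯ → f n` is a geodesic path in `E_d`: a walk of minimal length
among all walks with the same endpoints. -/
def IsGeodesicWalk (d n : ℕ) (f : ℕ → OnePoint ℂ) : Prop :=
  IsWalk d n f ∧ ∀ (m : ℕ) (g : ℕ → OnePoint ℂ), IsWalk d m g → g 0 = f 0 → g m = f n → n ≤ m

/-- Numerators of the convergents of `[a₁, a₂, …]` (`a 0` is unused):
`p₀ = 0`, `p₁ = 1`, `p_k = a_k p_{k−1} + p_{k−2}`. -/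
noncomputable def cfP (a : ℕ → ℂ) : ℕ → ℂ
  | 0 => 0
  | 1 => 1
  | (k + 2) => a (k + 2) * cfP a (k + 1) + cfP a k

/-- Denominators of the convergents of `[a₁, a₂, …]`:
`q₀ = 1`, `q₁ = a₁`, `q_k = a_k q_{k−1} + q_{k−2}`. -/
noncomputable def cfQ (a : ℕ → ℂ) : ℕ → ℂ
  | 0 => 1
  | 1 => a 1
  | (k + 2) => a (k + 2) * cfQ a (k + 1) + cfQ a k

/-- The walk `∞ → p₀/q₀ = 0 → p₁/q₁ → ⋯` along the convergents of `[a₁, a₂, …]`. -/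
noncomputable def cfWalk (a : ℕ → ℂ) : ℕ → OnePoint ℂ :=
  fun k => if k = 0 then OnePoint.infty else divC (cfP a (k - 1)) (cfQ a (k - 1))

/-- Numerators of the convergents of `[a₀; a₁, a₂, …]`:
`p₀ = a₀`, `p₁ = a₁a₀ + 1` (with `p₋₁ = 1`), `p_k = a_k p_{k−1} + p_{k−2}`. -/
noncomputable def cfP0 (a : ℕ → ℂ) : ℕ → ℂ
  | 0 => a 0
  | 1 => a 1 * a 0 + 1
  | (k + 2) => a (k + 2) * cfP0 a (k + 1) + cfP0 a k

/-- Denominators of the convergents of `[a₀; a₁, a₂, …]`: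
`q₀ = 1`, `q₁ = a₁` (with `q₋₁ = 0`), `q_k = a_k q_{k−1} + q_{k−2}`. -/
noncomputable def cfQ0 (a : ℕ → ℂ) : ℕ → ℂ
  | 0 => 1
  | 1 => a 1
  | (k + 2) => a (k + 2) * cfQ0 a (k + 1) + cfQ0 a k

/-- The walk `∞ → p₀/q₀ → p₁/q₁ → ⋯` along the convergents of `[a₀; a₁, …]`. -/
noncomputable def cfWalk0 (a : ℕ → ℂ) : ℕ → OnePoint ℂ :=
  fun k => if k = 0 then OnePoint.infty else divC (cfP0 a (k - 1)) (cfQ0 a (k - 1))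

/-- A unit of the ring `ℤ[ω_d]`. -/
def IsUnitIn (d : ℕ) (ζ : ℂ) : Prop := ζ ∈ ringInt d ∧ ∃ η ∈ ringInt d, ζ * η = 1

lemma omega_rel (d : ℕ) : ∃ tr nm : ℤ,
    omegaD d + (starRingEnd ℂ) (omegaD d) = (tr : ℂ) ∧
    omegaD d * (starRingEnd ℂ) (omegaD d) = (nm : ℂ) := by
  have hd2 : ((Real.sqrt d : ℂ))^2 = (d : ℂ) := by
    rw [← Complex.ofReal_pow, Real.sq_sqrt (Nat.cast_nonneg d)]
    norm_num
  have hI := Complex.I_sq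
  by_cases h : d % 4 = 3
  · obtain ⟨m, hm⟩ : ∃ m, d + 1 = 4 * m := ⟨(d+1)/4, by omega⟩
    have hm' : (d : ℂ) + 1 = 4 * m := by exact_mod_cast congrArg (Nat.cast : ℕ → ℂ) hm
    have hc : (starRingEnd ℂ) (omegaD d) = (1 - Complex.I * Real.sqrt d) / 2 := by
      rw [omegaD, if_pos h, map_div₀, map_add, map_one, map_mul, Complex.conj_I,
        Complex.conj_ofReal, map_ofNat]
      ring
    refine ⟨1, m, ?_, ?_⟩
    · rw [hc]; simp only [omegaD, if_pos h]; push_cast; ring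
    · rw [hc]; simp only [omegaD, if_pos h]
      field_simp
      linear_combination (-((Real.sqrt d : ℂ))^2) * hI + hd2 + hm'
  · have hc : (starRingEnd ℂ) (omegaD d) = -(Complex.I * Real.sqrt d) := by
      rw [omegaD, if_neg h, map_mul, Complex.conj_I, Complex.conj_ofReal]
      ring
    refine ⟨0, d, ?_, ?_⟩
    · rw [hc]; simp only [omegaD, if_neg h]; push_cast; ring
    · rw [hc]; simp only [omegaD, if_neg h]
      linear_combination (-(((Real.sqrt d : ℂ))^2)) * hI + hd2

lemma mem_ringInt_zero (d : ℕ) : (0:ℂ) ∈ ringInt d := ⟨0, 0, by push_cast; ring⟩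

lemma mem_ringInt_one (d : ℕ) : (1:ℂ) ∈ ringInt d := ⟨1, 0, by push_cast; ring⟩

lemma mem_ringInt_add {d : ℕ} {x y : ℂ} (hx : x ∈ ringInt d) (hy : y ∈ ringInt d) :
    x + y ∈ ringInt d := by
  obtain ⟨a, b, rfl⟩ := hx; obtain ⟨c, e, rfl⟩ := hy
  exact ⟨a + c, b + e, by push_cast; ring⟩

lemma mem_ringInt_neg {d : ℕ} {x : ℂ} (hx : x ∈ ringInt d) : -x ∈ ringInt d := by
  obtain ⟨a, b, rfl⟩ := hx
  exact ⟨-a, -b, by push_cast; ring⟩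

lemma mem_ringInt_mul {d : ℕ} {x y : ℂ} (hx : x ∈ ringInt d) (hy : y ∈ ringInt d) :
    x * y ∈ ringInt d := by
  obtain ⟨tr, nm, htr, hnm⟩ := omega_rel d
  have hsq : omegaD d ^ 2 = tr * omegaD d - nm := by
    linear_combination (omegaD d) * htr - hnm
  obtain ⟨a, b, rfl⟩ := hx; obtain ⟨c, e, rfl⟩ := hy
  exact ⟨a*c - b*e*nm, a*e + b*c + b*e*tr, by push_cast; linear_combination ((b:ℂ)*(e:ℂ)) * hsq⟩

lemma mem_ringInt_conj {d : ℕ} {x : ℂ} (hx : x ∈ ringInt d) : (starRingEnd ℂ) x ∈ ringInt d := by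
  obtain ⟨tr, nm, htr, hnm⟩ := omega_rel d
  obtain ⟨a, b, rfl⟩ := hx
  refine ⟨a + b*tr, -b, ?_⟩
  rw [map_add, map_mul, map_intCast, map_intCast]
  push_cast
  linear_combination (b:ℂ) * htr

lemma mem_ringInt_neg_one_pow (d k : ℕ) : ((-1:ℂ))^k ∈ ringInt d := by
  rcases Nat.even_or_odd k with h | h
  · rw [h.neg_one_pow]; exact mem_ringInt_one d
  · rw [h.neg_one_pow]; exact mem_ringInt_neg (mem_ringInt_one d)

lemma exists_norm {d : ℕ} {x : ℂ} (hx : x ∈ ringInt d) :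
    ∃ n : ℤ, x * (starRingEnd ℂ) x = (n:ℂ) := by
  obtain ⟨tr, nm, htr, hnm⟩ := omega_rel d
  obtain ⟨a, b, rfl⟩ := hx
  refine ⟨a^2 + a*b*tr + b^2*nm, ?_⟩
  rw [map_add, map_mul, map_intCast, map_intCast]
  push_cast
  linear_combination ((a:ℂ)*(b:ℂ)) * htr + ((b:ℂ)^2) * hnm

lemma unit_mul_conj {d : ℕ} {ζ : ℂ} (h : IsUnitIn d ζ) : ζ * (starRingEnd ℂ) ζ = 1 := by
  obtain ⟨hζ, η, hη, hζη⟩ := h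
  obtain ⟨n₁, h1⟩ := exists_norm hζ
  obtain ⟨n₂, h2⟩ := exists_norm hη
  have hmul : ((n₁ * n₂ : ℤ) : ℂ) = 1 := by
    push_cast
    rw [← h1, ← h2]
    have h3 : (ζ*η) * (starRingEnd ℂ) (ζ*η) = 1 := by rw [hζη]; simp
    rw [map_mul] at h3
    linear_combination h3
  have hZ : n₁ * n₂ = 1 := by exact_mod_cast hmul
  have hr : (n₁:ℝ) = Complex.normSq ζ := by
    have : (n₁:ℂ) = (Complex.normSq ζ : ℝ) := by rw [← h1, Complex.mul_conj]
    exact_mod_cast this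
  have hnonneg : 0 ≤ n₁ := by
    have h4 : (0:ℝ) ≤ (n₁:ℝ) := by rw [hr]; exact Complex.normSq_nonneg ζ
    exact_mod_cast h4
  have hone : n₁ = 1 := by
    rcases Int.isUnit_iff.mp (IsUnit.of_mul_eq_one _ hZ) with h | h
    · exact h
    · omega
  rw [h1, hone]; norm_num

lemma unit_abs {d : ℕ} {ζ : ℂ} (h : IsUnitIn d ζ) : ‖ζ‖ = 1 := by
  have h1 := unit_mul_conj h
  have h2 : ‖ζ‖ * ‖ζ‖ = 1 := by
    have h3 := congrArg (‖·‖) h1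
    rwa [norm_mul, Complex.norm_conj, norm_one] at h3
  rcases mul_self_eq_one_iff.mp h2 with h | h
  · exact h
  · have := norm_nonneg ζ; linarith

noncomputable def pE (a : ℕ → ℂ) : ℕ → ℂ
  | 0 => 1
  | (k+1) => cfP0 a k

noncomputable def qE (a : ℕ → ℂ) : ℕ → ℂ
  | 0 => 0
  | (k+1) => cfQ0 a k

lemma pE_rec (a : ℕ → ℂ) (k : ℕ) : pE a (k+2) = a (k+1) * pE a (k+1) + pE a k := by
  cases k with
  | zero => simp [pE, cfP0]
  | succ j => simp [pE, cfP0]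

lemma qE_rec (a : ℕ → ℂ) (k : ℕ) : qE a (k+2) = a (k+1) * qE a (k+1) + qE a k := by
  cases k with
  | zero => simp [qE, cfQ0]
  | succ j => simp [qE, cfQ0]

lemma walk_eq (a : ℕ → ℂ) (k : ℕ) : cfWalk0 a k = divC (pE a k) (qE a k) := by
  cases k with
  | zero => simp [cfWalk0, pE, qE, divC]
  | succ j => simp [cfWalk0, pE, qE]

lemma detE (a : ℕ → ℂ) : ∀ k, pE a (k+1) * qE a k - pE a k * qE a (k+1) = (-1:ℂ)^(k+1)
  | 0 => by simp [pE, qE, cfP0, cfQ0]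
  | (k+1) => by
    have ih := detE a k
    rw [pE_rec, qE_rec]
    linear_combination -ih

lemma detE' (d : ℕ) (a : ℕ → ℂ) (k : ℕ) : ∃ ε : ℂ, ε * ε = 1 ∧ ‖ε‖ = 1 ∧
    ε ∈ ringInt d ∧ pE a (k+1) * qE a k - pE a k * qE a (k+1) = ε := by
  refine ⟨(-1:ℂ)^(k+1), ?_, ?_, mem_ringInt_neg_one_pow d (k+1), detE a k⟩
  · rw [← pow_add]; exact Even.neg_one_pow ⟨k+1, by ring⟩
  · rw [norm_pow]; simp

lemma pqE_mem (d : ℕ) (a : ℕ → ℂ) : ∀ k, (∀ j, j < k → a j ∈ ringInt d) →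
    pE a k ∈ ringInt d ∧ qE a k ∈ ringInt d
  | 0, _ => ⟨mem_ringInt_one d, mem_ringInt_zero d⟩
  | 1, h => ⟨by simpa [pE, cfP0] using h 0 (by norm_num),
             by simpa [qE, cfQ0] using mem_ringInt_one d⟩
  | (k+2), h => by
    have h1 := pqE_mem d a (k+1) (fun j hj => h j (by omega))
    have h0 := pqE_mem d a k (fun j hj => h j (by omega))
    have hak := h (k+1) (by omega)
    rw [pE_rec, qE_rec]
    exact ⟨mem_ringInt_add (mem_ringInt_mul hak h1.1) h0.1,
           mem_ringInt_add (mem_ringInt_mul hak h1.2) h0.2⟩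

lemma coprimeE (d : ℕ) (a : ℕ → ℂ) : ∀ k, (∀ j, j < k → a j ∈ ringInt d) →
    ∃ u v : ℂ, u ∈ ringInt d ∧ v ∈ ringInt d ∧ u * pE a k + v * qE a k = 1
  | 0, _ => ⟨1, 0, mem_ringInt_one d, mem_ringInt_zero d, by simp [pE, qE]⟩
  | (k+1), h => by
    obtain ⟨ε, hε2, _, hεm, hD⟩ := detE' d a k
    have hq := (pqE_mem d a k (fun j hj => h j (by omega))).2
    have hp := (pqE_mem d a k (fun j hj => h j (by omega))).1
    refine ⟨ε * qE a k, -(ε * pE a k), mem_ringInt_mul hεm hq,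
      mem_ringInt_neg (mem_ringInt_mul hεm hp), ?_⟩
    linear_combination ε * hD + hε2

/-- Let `d ∈ {1,2,3,7,11}` and let `[a₀; a₁, …, a_N]` with
all `a_k ∈ ℤ[ω_d]` be a geodesic continued fraction expansion (every walk
`∞ → p₀/q₀ → ⋯ → p_n/q_n` along its convergents is a geodesic path in `E_d`).
Then for every `n ≥ 1` for which the relevant partial quotients exist:
(i) `|a_n| ≠ 1`; (ii) if `|a_n| = √2` then `a_{n+1} ≠ −conj(a_n)`;
(iii) if `a_n = 2ζ` for a unit `ζ` of `ℤ[ω_d]` then `a_{n+1} ≠ −2·conj(ζ)`. -/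
theorem geodesic_expansion_digit_restrictions (d : ℕ) (hd : d ∈ ({1, 2, 3, 7, 11} : Set ℕ))
    (N : ℕ) (a : ℕ → ℂ) (ha : ∀ k ≤ N, a k ∈ ringInt d)
    (hgeo : ∀ n ≤ N, IsGeodesicWalk d (n + 1) (cfWalk0 a)) :
    ∀ n, 1 ≤ n → n ≤ N →
      ‖a n‖ ≠ 1 ∧
      (n + 1 ≤ N →
        (‖a n‖ = Real.sqrt 2 → a (n + 1) ≠ -(starRingEnd ℂ) (a n)) ∧
        (∀ ζ : ℂ, IsUnitIn d ζ → a n = 2 * ζ →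
          a (n + 1) ≠ -2 * (starRingEnd ℂ) ζ)) := by
  intro n hn1 hnN
  obtain ⟨m, rfl⟩ : ∃ m, n = m + 1 := ⟨n - 1, by omega⟩
  constructor
  · -- (i) |a (m+1)| ≠ 1
    intro habs
    have hmem : ∀ j, j < m + 2 → a j ∈ ringInt d := fun j hj => ha j (by omega)
    obtain ⟨ε, hε2, hεa, hεm, hD⟩ := detE' d a m
    have hdet : pE a m * qE a (m+2) - pE a (m+2) * qE a m = -(a (m+1)) * ε := by
      have h1 : pE a (m+2) = a (m+1) * pE a (m+1) + pE a m := pE_rec a m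
      have h2 : qE a (m+2) = a (m+1) * qE a (m+1) + qE a m := qE_rec a m
      rw [h1, h2]
      linear_combination (-(a (m+1))) * hD
    have hpm := pqE_mem d a m (fun j hj => hmem j (by omega))
    have hpm2 := pqE_mem d a (m+2) hmem
    have hcop := coprimeE d a m (fun j hj => hmem j (by omega))
    have hcop2 := coprimeE d a (m+2) hmem
    have hadj : FareyAdj d (cfWalk0 a m) (cfWalk0 a (m+2)) := by
      rw [walk_eq, walk_eq]
      refine ⟨pE a m, qE a m, pE a (m+2), qE a (m+2), hpm.1, hpm.2, hpm2.1, hpm2.2,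
        hcop, hcop2, rfl, rfl, ?_⟩
      rw [hdet, norm_mul, hεa]
      simp [habs]
    set g : ℕ → OnePoint ℂ := fun k => if k ≤ m then cfWalk0 a k else cfWalk0 a (m+2) with hg
    have hW : IsWalk d (m+1) g := by
      intro k hk
      rcases Nat.lt_or_ge k m with hlt | hge
      · have e1 : g k = cfWalk0 a k := by simp only [hg]; rw [if_pos (by omega : k ≤ m)]
        have e2 : g (k+1) = cfWalk0 a (k+1) := by simp only [hg]; rw [if_pos (by omega : k+1 ≤ m)]
        rw [e1, e2]
        exact (hgeo (m+1) hnN).1 k (by omega)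
      · have hkm : k = m := by omega
        have e1 : g k = cfWalk0 a m := by simp only [hg]; rw [hkm, if_pos le_rfl]
        have e2 : g (k+1) = cfWalk0 a (m+2) := by simp only [hg]; rw [hkm, if_neg (by omega)]
        rw [e1, e2]; exact hadj
    have h0 : g 0 = cfWalk0 a 0 := by simp only [hg]; rw [if_pos (Nat.zero_le m)]
    have hend : g (m+1) = cfWalk0 a (m+1+1) := by simp only [hg]; rw [if_neg (by omega)]
    have hfin := (hgeo (m+1) hnN).2 (m+1) g hW h0 hend
    omega
  · intro hn2
    have hN2 : m + 2 ≤ N := by omega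
    have hmem : ∀ j, j < m + 3 → a j ∈ ringInt d := fun j hj => ha j (by omega)
    obtain ⟨ε, hε2, hεa, hεm, hD⟩ := detE' d a m
    have hpm := pqE_mem d a m (fun j hj => hmem j (by omega))
    have hpm1 := pqE_mem d a (m+1) (fun j hj => hmem j (by omega))
    have hpm3 := pqE_mem d a (m+3) hmem
    have hcop := coprimeE d a m (fun j hj => hmem j (by omega))
    have hcop3 := coprimeE d a (m+3) hmem
    constructor
    · -- (ii)
      intro habs heq
      have hnorm : Complex.normSq (a (m+1)) = 2 := by
        rw [← Complex.sq_norm, habs]; exact Real.sq_sqrt (by norm_num)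
      have hcc : a (m+1) * (starRingEnd ℂ) (a (m+1)) = 2 := by
        rw [Complex.mul_conj, hnorm]; norm_num
      have haa : a (m+2) * a (m+1) = -2 := by
        linear_combination (a (m+1)) * heq - hcc
      have hp3 : pE a (m+3) = -(pE a (m+1)) + a (m+2) * pE a m := by
        have h1 : pE a (m+3) = a (m+2) * pE a (m+2) + pE a (m+1) := pE_rec a (m+1)
        have h2 : pE a (m+2) = a (m+1) * pE a (m+1) + pE a m := pE_rec a m
        rw [h1, h2]; linear_combination (pE a (m+1)) * haa
      have hq3 : qE a (m+3) = -(qE a (m+1)) + a (m+2) * qE a m := by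
        have h1 : qE a (m+3) = a (m+2) * qE a (m+2) + qE a (m+1) := qE_rec a (m+1)
        have h2 : qE a (m+2) = a (m+1) * qE a (m+1) + qE a m := qE_rec a m
        rw [h1, h2]; linear_combination (qE a (m+1)) * haa
      have hdet : pE a m * qE a (m+3) - pE a (m+3) * qE a m = ε := by
        rw [hp3, hq3]; linear_combination hD
      have hadj : FareyAdj d (cfWalk0 a m) (cfWalk0 a (m+3)) := by
        rw [walk_eq, walk_eq]
        exact ⟨pE a m, qE a m, pE a (m+3), qE a (m+3), hpm.1, hpm.2, hpm3.1, hpm3.2,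
          hcop, hcop3, rfl, rfl, by rw [hdet, hεa]⟩
      set g : ℕ → OnePoint ℂ := fun k => if k ≤ m then cfWalk0 a k else cfWalk0 a (m+3) with hg
      have hW : IsWalk d (m+1) g := by
        intro k hk
        rcases Nat.lt_or_ge k m with hlt | hge
        · have e1 : g k = cfWalk0 a k := by simp only [hg]; rw [if_pos (by omega : k ≤ m)]
          have e2 : g (k+1) = cfWalk0 a (k+1) := by
            simp only [hg]; rw [if_pos (by omega : k+1 ≤ m)]
          rw [e1, e2]
          exact (hgeo (m+2) hN2).1 k (by omega)
        · have hkm : k = m := by omega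
          have e1 : g k = cfWalk0 a m := by simp only [hg]; rw [hkm, if_pos le_rfl]
          have e2 : g (k+1) = cfWalk0 a (m+3) := by simp only [hg]; rw [hkm, if_neg (by omega)]
          rw [e1, e2]; exact hadj
      have h0 : g 0 = cfWalk0 a 0 := by simp only [hg]; rw [if_pos (Nat.zero_le m)]
      have hend : g (m+1) = cfWalk0 a (m+2+1) := by simp only [hg]; rw [if_neg (by omega)]
      have hfin := (hgeo (m+2) hN2).2 (m+1) g hW h0 hend
      omega
    · -- (iii)
      intro ζ hζ haζ heq
      have hζc : ζ * (starRingEnd ℂ) ζ = 1 := unit_mul_conj hζ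
      have hζa : ‖ζ‖ = 1 := unit_abs hζ
      have hζm : ζ ∈ ringInt d := hζ.1
      have hcm : (starRingEnd ℂ) ζ ∈ ringInt d := mem_ringInt_conj hζm
      set c : ℂ := (starRingEnd ℂ) ζ with hcdef
      set r : ℂ := ζ * pE a (m+1) + pE a m with hrdef
      set s : ℂ := ζ * qE a (m+1) + qE a m with hsdef
      have hrm : r ∈ ringInt d := mem_ringInt_add (mem_ringInt_mul hζm hpm1.1) hpm.1
      have hsm : s ∈ ringInt d := mem_ringInt_add (mem_ringInt_mul hζm hpm1.2) hpm.2
      have hdet1 : pE a m * s - r * qE a m = (-ζ) * ε := by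
        rw [hrdef, hsdef]; linear_combination (-ζ) * hD
      have hcoprs : CoprimeIn d r s := by
        refine ⟨c * ε * qE a m, -(c * ε * pE a m),
          mem_ringInt_mul (mem_ringInt_mul hcm hεm) hpm.2,
          mem_ringInt_neg (mem_ringInt_mul (mem_ringInt_mul hcm hεm) hpm.1), ?_⟩
        linear_combination (-(c*ε)) * hdet1 + (c*ζ) * hε2 + hζc
      have hp3 : pE a (m+3) = -3 * pE a (m+1) - 2*c*pE a m := by
        have h1 : pE a (m+3) = a (m+2) * pE a (m+2) + pE a (m+1) := pE_rec a (m+1)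
        have h2 : pE a (m+2) = a (m+1) * pE a (m+1) + pE a m := pE_rec a m
        rw [h1, h2]
        linear_combination (a (m+2) * pE a (m+1)) * haζ + (2*ζ*pE a (m+1) + pE a m) * heq
          + (-4*pE a (m+1)) * hζc
      have hq3 : qE a (m+3) = -3 * qE a (m+1) - 2*c*qE a m := by
        have h1 : qE a (m+3) = a (m+2) * qE a (m+2) + qE a (m+1) := qE_rec a (m+1)
        have h2 : qE a (m+2) = a (m+1) * qE a (m+1) + qE a m := qE_rec a m
        rw [h1, h2]
        linear_combination (a (m+2) * qE a (m+1)) * haζ + (2*ζ*qE a (m+1) + qE a m) * heq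
          + (-4*qE a (m+1)) * hζc
      have hdet2 : r * qE a (m+3) - pE a (m+3) * s = ε := by
        rw [hp3, hq3, hrdef, hsdef]
        linear_combination (3 - 2*c*ζ) * hD + (-2*ε) * hζc
      have hadj1 : FareyAdj d (cfWalk0 a m) (divC r s) := by
        rw [walk_eq]
        refine ⟨pE a m, qE a m, r, s, hpm.1, hpm.2, hrm, hsm, hcop, hcoprs, rfl, rfl, ?_⟩
        rw [hdet1, norm_mul, hεa]
        simp [hζa]
      have hadj2 : FareyAdj d (divC r s) (cfWalk0 a (m+3)) := by
        rw [walk_eq]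
        exact ⟨r, s, pE a (m+3), qE a (m+3), hrm, hsm, hpm3.1, hpm3.2, hcoprs, hcop3,
          rfl, rfl, by rw [hdet2, hεa]⟩
      set g : ℕ → OnePoint ℂ :=
        fun k => if k ≤ m then cfWalk0 a k else if k = m+1 then divC r s else cfWalk0 a (m+3)
        with hg
      have hW : IsWalk d (m+2) g := by
        intro k hk
        rcases Nat.lt_or_ge k m with hlt | hge
        · have e1 : g k = cfWalk0 a k := by simp only [hg]; rw [if_pos (by omega : k ≤ m)]
          have e2 : g (k+1) = cfWalk0 a (k+1) := by
            simp only [hg]; rw [if_pos (by omega : k+1 ≤ m)]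
          rw [e1, e2]
          exact (hgeo (m+2) hN2).1 k (by omega)
        · rcases Nat.lt_or_ge k (m+1) with hlt1 | hge1
          · have hkm : k = m := by omega
            have e1 : g k = cfWalk0 a m := by simp only [hg]; rw [hkm, if_pos le_rfl]
            have e2 : g (k+1) = divC r s := by
              simp only [hg]; rw [hkm, if_neg (by omega), if_pos rfl]
            rw [e1, e2]; exact hadj1
          · have hkm : k = m+1 := by omega
            have e1 : g k = divC r s := by
              simp only [hg]; rw [hkm, if_neg (by omega), if_pos rfl]
            have e2 : g (k+1) = cfWalk0 a (m+3) := by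
              simp only [hg]; rw [hkm, if_neg (by omega), if_neg (by omega)]
            rw [e1, e2]; exact hadj2
      have h0 : g 0 = cfWalk0 a 0 := by simp only [hg]; rw [if_pos (Nat.zero_le m)]
      have hend : g (m+2) = cfWalk0 a (m+2+1) := by
        simp only [hg]; rw [if_neg (by omega), if_neg (by omega)]
      have hfin := (hgeo (m+2) hN2).2 (m+2) g hW h0 hend
      omega
end

section
/- Let d ∈ {1,2,3,7,11} and let x = [a₁,…,a_n] be a continued fraction expansion with a_ℓ ∈ ℤ[ω_d] and |a_ℓ| ≥ 4.17209 for every ℓ ∈ {1,…,n}. If x = [b₁,…,b_m] is any continued fraction expansion of the same x with all b_k ∈ ℤ[ω_d] and (b₁,…,b_m) ≠ (a₁,…,a_n), then m > n. Hence [a₁,…,a_n] is the unique shortest continued fraction expansion of x with partial quotients in ℤ[ω_d], i.e., the unique geodesic expansion of x. -/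
-- ## Auxiliary machinery for the proof

lemma sqrtd_sq (d : ℕ) : (Real.sqrt d : ℂ) * (Real.sqrt d : ℂ) = (d : ℂ) := by
  have h := Real.mul_self_sqrt (by positivity : (0:ℝ) ≤ (d:ℝ))
  calc (Real.sqrt d : ℂ) * (Real.sqrt d : ℂ) = ((Real.sqrt d * Real.sqrt d : ℝ) : ℂ) := by
        push_cast; ring
    _ = (d : ℂ) := by rw [h]; norm_cast

lemma omegaD_sq (d : ℕ) : ∃ e f : ℤ, omegaD d ^ 2 = (e : ℂ) + (f : ℂ) * omegaD d := by
  have hsq := sqrtd_sq d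
  by_cases hc : d % 4 = 3
  · refine ⟨-(((d + 1) / 4 : ℕ) : ℤ), 1, ?_⟩
    have h4 : ((d + 1) / 4 : ℕ) * 4 = d + 1 := Nat.div_mul_cancel (by omega)
    have h4' : ((((d + 1) / 4 : ℕ) : ℂ)) * 4 = (d : ℂ) + 1 := by exact_mod_cast h4
    simp only [omegaD, if_pos hc, Int.cast_neg, Int.cast_natCast, Int.cast_one]
    linear_combination ((Real.sqrt d : ℂ) * (Real.sqrt d : ℂ) / 4) * Complex.I_sq - (1/4 : ℂ) * hsq + (1/4 : ℂ) * h4'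
  · refine ⟨-(d : ℤ), 0, ?_⟩
    simp only [omegaD, if_neg hc, Int.cast_neg, Int.cast_natCast, Int.cast_zero]
    linear_combination ((Real.sqrt d : ℂ) * (Real.sqrt d : ℂ)) * Complex.I_sq - hsq

lemma ringInt_mem_one (d : ℕ) : (1 : ℂ) ∈ ringInt d := ⟨1, 0, by push_cast; ring⟩
lemma ringInt_mem_zero (d : ℕ) : (0 : ℂ) ∈ ringInt d := ⟨0, 0, by push_cast; ring⟩

lemma ringInt_mem_add {d : ℕ} {z w : ℂ} (hz : z ∈ ringInt d) (hw : w ∈ ringInt d) :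
    z + w ∈ ringInt d := by
  obtain ⟨p, q, rfl⟩ := hz; obtain ⟨r, s, rfl⟩ := hw
  exact ⟨p + r, q + s, by push_cast; ring⟩

lemma ringInt_mem_sub {d : ℕ} {z w : ℂ} (hz : z ∈ ringInt d) (hw : w ∈ ringInt d) :
    z - w ∈ ringInt d := by
  obtain ⟨p, q, rfl⟩ := hz; obtain ⟨r, s, rfl⟩ := hw
  exact ⟨p - r, q - s, by push_cast; ring⟩

lemma ringInt_mem_mul {d : ℕ} {z w : ℂ} (hz : z ∈ ringInt d) (hw : w ∈ ringInt d) :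
    z * w ∈ ringInt d := by
  obtain ⟨p, q, rfl⟩ := hz; obtain ⟨r, s, rfl⟩ := hw
  obtain ⟨e, f, hef⟩ := omegaD_sq d
  refine ⟨p * r + e * q * s, p * s + q * r + f * q * s, ?_⟩
  push_cast
  linear_combination ((q : ℂ) * (s : ℂ)) * hef

lemma one_le_abs_ringInt {d : ℕ} (hd1 : 1 ≤ d) {z : ℂ} (hz : z ∈ ringInt d) (h0 : z ≠ 0) :
    1 ≤ ‖z‖ := by
  obtain ⟨p, q, rfl⟩ := hz
  have hss : Real.sqrt d * Real.sqrt d = (d : ℝ) := Real.mul_self_sqrt (by positivity)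
  have hd1' : (1 : ℝ) ≤ (d : ℝ) := by exact_mod_cast hd1
  have hpq : ¬(p = 0 ∧ q = 0) := by
    rintro ⟨rfl, rfl⟩; simp at h0
  have key : 1 ≤ Complex.normSq ((p : ℂ) + (q : ℂ) * omegaD d) := by
    by_cases hc : d % 4 = 3
    · have hz' : (p : ℂ) + (q : ℂ) * omegaD d
          = (((p : ℝ) + (q : ℝ) * (1/2) : ℝ) : ℂ) + (((q : ℝ) * (Real.sqrt d / 2) : ℝ) : ℂ) * Complex.I := by
        simp only [omegaD, if_pos hc]; push_cast; ring
      rw [hz', Complex.normSq_add_mul_I]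
      have hcnat : (4 : ℕ) ∣ d + 1 := by omega
      set c : ℕ := (d + 1) / 4 with hcdef
      have h4 : (c : ℤ) * 4 = (d : ℤ) + 1 := by
        have := Nat.div_mul_cancel hcnat
        exact_mod_cast congrArg (fun t : ℕ => (t : ℤ)) this
      have hN : 1 ≤ p ^ 2 + p * q + (c : ℤ) * q ^ 2 := by
        rcases eq_or_ne q 0 with rfl | hq
        · have hp : p ≠ 0 := by tauto
          have : 1 ≤ p ^ 2 := by nlinarith [sq_abs p, Int.one_le_abs hp]
          nlinarith
        · have hq1 : 1 ≤ q ^ 2 := by nlinarith [sq_abs q, Int.one_le_abs hq]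
          have hd3 : 3 ≤ (d : ℤ) := by omega
          nlinarith [sq_nonneg (2 * p + q)]
      have hNR : (1 : ℝ) ≤ (p : ℝ) ^ 2 + (p : ℝ) * (q : ℝ) + (c : ℝ) * (q : ℝ) ^ 2 := by
        exact_mod_cast hN
      have h4R : (c : ℝ) * 4 = (d : ℝ) + 1 := by exact_mod_cast h4
      nlinarith [hNR, hss, h4R]
    · have hz' : (p : ℂ) + (q : ℂ) * omegaD d
          = (((p : ℝ) : ℝ) : ℂ) + (((q : ℝ) * Real.sqrt d : ℝ) : ℂ) * Complex.I := by
        simp only [omegaD, if_neg hc]; push_cast; ring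
      rw [hz', Complex.normSq_add_mul_I]
      rcases eq_or_ne q 0 with rfl | hq
      · have hp : p ≠ 0 := by tauto
        have : (1 : ℝ) ≤ (p : ℝ) ^ 2 := by
          have : 1 ≤ p ^ 2 := by nlinarith [sq_abs p, Int.one_le_abs hp]
          exact_mod_cast this
        nlinarith
      · have hq1 : (1 : ℝ) ≤ (q : ℝ) ^ 2 := by
          have : 1 ≤ q ^ 2 := by nlinarith [sq_abs q, Int.one_le_abs hq]
          exact_mod_cast this
        nlinarith [sq_nonneg ((p : ℝ))]
  have hsqa := Complex.sq_norm ((p : ℂ) + (q : ℂ) * omegaD d)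
  nlinarith [norm_nonneg ((p : ℂ) + (q : ℂ) * omegaD d)]

noncomputable def cP (a : ℕ → ℂ) : ℕ → ℂ
  | 0 => 1
  | 1 => 0
  | (k + 2) => a (k + 1) * cP a (k + 1) + cP a k

noncomputable def cQ (a : ℕ → ℂ) : ℕ → ℂ
  | 0 => 0
  | 1 => 1
  | (k + 2) => a (k + 1) * cQ a (k + 1) + cQ a k

noncomputable def gfn (a b : ℕ → ℂ) (k i : ℕ) : ℂ := cQ a k * cP b i - cP a k * cQ b i

lemma cP_rec (a : ℕ → ℂ) (k : ℕ) : cP a (k + 2) = a (k + 1) * cP a (k + 1) + cP a k := by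
  simp [cP]

lemma cQ_rec (a : ℕ → ℂ) (k : ℕ) : cQ a (k + 2) = a (k + 1) * cQ a (k + 1) + cQ a k := by
  simp [cQ]

lemma gfn_rec (a b : ℕ → ℂ) (k i : ℕ) :
    gfn a b (k + 2) i = a (k + 1) * gfn a b (k + 1) i + gfn a b k i := by
  simp only [gfn, cP_rec, cQ_rec]; ring

lemma gfn_det (a b : ℕ → ℂ) (k i : ℕ) :
    gfn a b k i * gfn a b (k + 1) (i + 1) - gfn a b (k + 1) i * gfn a b k (i + 1)
      = (cP a k * cQ a (k + 1) - cP a (k + 1) * cQ a k)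
        * (cP b i * cQ b (i + 1) - cP b (i + 1) * cQ b i) := by
  simp only [gfn]; ring

lemma absD (a : ℕ → ℂ) : ∀ k, ‖cP a k * cQ a (k + 1) - cP a (k + 1) * cQ a k‖ = 1 := by
  intro k
  induction k with
  | zero => simp [cP, cQ]
  | succ k IH =>
    have h : cP a (k + 1) * cQ a (k + 2) - cP a (k + 2) * cQ a (k + 1)
        = -(cP a k * cQ a (k + 1) - cP a (k + 1) * cQ a k) := by
      simp only [cP_rec, cQ_rec]; ring
    rw [h, norm_neg]
    exact IH

lemma cPQ_mem (d : ℕ) (a : ℕ → ℂ) (N : ℕ) (ha : ∀ k, 1 ≤ k → k ≤ N → a k ∈ ringInt d) :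
    ∀ i, i ≤ N + 1 → cP a i ∈ ringInt d ∧ cQ a i ∈ ringInt d := by
  have main : ∀ i, i ≤ N →
      ((cP a i ∈ ringInt d ∧ cQ a i ∈ ringInt d) ∧
       (cP a (i + 1) ∈ ringInt d ∧ cQ a (i + 1) ∈ ringInt d)) := by
    intro i
    induction i with
    | zero =>
      intro _
      refine ⟨⟨?_, ?_⟩, ?_, ?_⟩
      · simpa [cP] using ringInt_mem_one d
      · simpa [cQ] using ringInt_mem_zero d
      · simpa [cP] using ringInt_mem_zero d
      · simpa [cQ] using ringInt_mem_one d
    | succ i IH =>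
      intro hi
      obtain ⟨⟨hp0, hq0⟩, hp1, hq1⟩ := IH (by omega)
      have hai : a (i + 1) ∈ ringInt d := ha (i + 1) (by omega) (by omega)
      refine ⟨⟨hp1, hq1⟩, ?_, ?_⟩
      · rw [cP_rec]; exact ringInt_mem_add (ringInt_mem_mul hai hp1) hp0
      · rw [cQ_rec]; exact ringInt_mem_add (ringInt_mem_mul hai hq1) hq0
  intro i hi
  match i, hi with
  | 0, _ => exact (main 0 (Nat.zero_le _)).1
  | (i + 1), hi => exact (main i (by omega)).2

lemma key_ineq (aa A B E F : ℂ) (haa : (4.17209 : ℝ) ≤ ‖aa‖)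
    (hB : B ≠ 0 → 1 ≤ ‖B‖) (hE : E ≠ 0 → 1 ≤ ‖E‖)
    (hF : ‖F‖ ≤ 1 / 2 * ‖E‖)
    (hdet : ‖B * F - (aa * B + A) * E‖ = 1) :
    ‖B‖ ≤ 1 / 2 * ‖A‖ := by
  by_cases hB0 : B = 0
  · simp only [hB0, norm_zero]
    positivity
  by_cases hE0 : E = 0
  · exfalso
    have hF0 : F = 0 := by
      have h1 : ‖F‖ ≤ 0 := by simpa [hE0] using hF
      have h2 := norm_nonneg F
      exact norm_eq_zero.mp (le_antisymm h1 h2)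
    rw [hE0, hF0] at hdet
    simp at hdet
  have h1 : 1 ≤ ‖B‖ := hB hB0
  have h2 : 1 ≤ ‖E‖ := hE hE0
  have htri : ‖(aa * B + A) * E‖ ≤ ‖B * F‖ + 1 := by
    have h := norm_add_le (B * F - (aa * B + A) * E) ((aa * B + A) * E)
    rw [show B * F - (aa * B + A) * E + (aa * B + A) * E = B * F by ring, hdet] at h
    have h' := norm_add_le (B * F) (-(B * F - (aa * B + A) * E))
    rw [show B * F + -(B * F - (aa * B + A) * E) = (aa * B + A) * E by ring,
      norm_neg, hdet] at h'
    linarith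
  rw [norm_mul, norm_mul] at htri
  have htri2 : ‖aa‖ * ‖B‖ ≤ ‖aa * B + A‖ + ‖A‖ := by
    have h := norm_add_le (aa * B + A) (-A)
    rw [show aa * B + A + -A = aa * B by ring, norm_mul, norm_neg] at h
    linarith
  have hG : ‖aa * B + A‖ ≤ 3 / 2 * ‖B‖ := by
    have hbe : 1 ≤ ‖B‖ * ‖E‖ := by nlinarith
    nlinarith [norm_nonneg (aa * B + A), norm_nonneg B, norm_nonneg E]
  nlinarith [norm_nonneg A, norm_nonneg B]

lemma key_ineq2 (aa A B : ℂ) (haa : (4.17209 : ℝ) ≤ ‖aa‖)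
    (hG : ‖aa * B + A‖ ≤ 1 / 2 * ‖B‖) :
    ‖B‖ ≤ 1 / 2 * ‖A‖ := by
  have htri2 : ‖aa‖ * ‖B‖ ≤ ‖aa * B + A‖ + ‖A‖ := by
    have h := norm_add_le (aa * B + A) (-A)
    rw [show aa * B + A + -A = aa * B by ring, norm_mul, norm_neg] at h
    linarith
  nlinarith [norm_nonneg A, norm_nonneg B, norm_nonneg (aa * B + A)]

/-- Let `d ∈ {1,2,3,7,11}` and let `x = [a₁,…,a_n]` with all
`a_ℓ ∈ ℤ[ω_d]` and `|a_ℓ| ≥ 4.17209` (the value being encoded by the tail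
sequence `s`, `s k = [a_{k+1},…,a_n]`, `s n = 0`, `s 0 = x`, with all
intermediate denominators nonzero). If `x = [b₁,…,b_m]` is any continued
fraction expansion of the same `x` with all `b_k ∈ ℤ[ω_d]` (tails `t`) and
`(b₁,…,b_m) ≠ (a₁,…,a_n)`, then `m > n`; hence `[a₁,…,a_n]` is the unique
shortest (geodesic) expansion of `x` with partial quotients in `ℤ[ω_d]`. -/
theorem large_digits_unique_shortest (d : ℕ) (hd : d ∈ ({1, 2, 3, 7, 11} : Set ℕ))
    (n m : ℕ) (hn : 1 ≤ n) (hm : 1 ≤ m) (a b : ℕ → ℂ) (x : ℂ)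
    (ha : ∀ k, 1 ≤ k → k ≤ n →
      a k ∈ ringInt d ∧ (4.17209 : ℝ) ≤ ‖a k‖)
    (hb : ∀ k, 1 ≤ k → k ≤ m → b k ∈ ringInt d)
    (s t : ℕ → ℂ)
    (hsn : s n = 0)
    (hsstep : ∀ k < n, a (k + 1) + s (k + 1) ≠ 0 ∧ s k = 1 / (a (k + 1) + s (k + 1)))
    (hs0 : s 0 = x)
    (htm : t m = 0)
    (htstep : ∀ k < m, b (k + 1) + t (k + 1) ≠ 0 ∧ t k = 1 / (b (k + 1) + t (k + 1)))
    (ht0 : t 0 = x)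
    (hne : ¬ (m = n ∧ ∀ k, 1 ≤ k → k ≤ n → b k = a k)) :
    n < m := by
  have hd1 : 1 ≤ d := by
    simp only [Set.mem_insert_iff, Set.mem_singleton_iff] at hd
    rcases hd with rfl | rfl | rfl | rfl | rfl <;> norm_num
  -- memberships
  have hmemA : ∀ i, i ≤ n + 1 → cP a i ∈ ringInt d ∧ cQ a i ∈ ringInt d :=
    cPQ_mem d a n (fun k h1 h2 => (ha k h1 h2).1)
  have hmemB : ∀ i, i ≤ m + 1 → cP b i ∈ ringInt d ∧ cQ b i ∈ ringInt d :=
    cPQ_mem d b m hb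
  have hgmem : ∀ k, k ≤ n + 1 → ∀ i, i ≤ m + 1 → gfn a b k i ∈ ringInt d := by
    intro k hk i hi
    exact ringInt_mem_sub (ringInt_mem_mul (hmemA k hk).2 (hmemB i hi).1)
      (ringInt_mem_mul (hmemA k hk).1 (hmemB i hi).2)
  -- the continued fraction identities
  have hI2 : ∀ (c : ℕ → ℂ) (u : ℕ → ℂ) (N : ℕ),
      u 0 = x → (∀ k < N, c (k + 1) + u (k + 1) ≠ 0 ∧ u k = 1 / (c (k + 1) + u (k + 1))) →
      ∀ k, k ≤ N → x * (cQ c (k + 1) + cQ c k * u k) = cP c (k + 1) + cP c k * u k := by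
    intro c u N hu0 hustep k
    induction k with
    | zero =>
      intro _
      simp only [cP, cQ]
      rw [hu0]; ring
    | succ k IH =>
      intro hk
      have IH' := IH (by omega)
      obtain ⟨hA, hu⟩ := hustep k (by omega)
      have hu1 : u k * (c (k + 1) + u (k + 1)) = 1 := by
        rw [hu]; field_simp
      rw [cP_rec, cQ_rec]
      linear_combination (c (k + 1) + u (k + 1)) * IH' + (cP c k - x * cQ c k) * hu1
  have hxpa : x * cQ a (n + 1) = cP a (n + 1) := by
    have h := hI2 a s n hs0 hsstep n le_rfl
    rw [hsn] at h
    simpa using h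
  have hxqb : x * cQ b (m + 1) = cP b (m + 1) := by
    have h := hI2 b t m ht0 htstep m le_rfl
    rw [htm] at h
    simpa using h
  have hg0 : gfn a b (n + 1) (m + 1) = 0 := by
    show cQ a (n + 1) * cP b (m + 1) - cP a (n + 1) * cQ b (m + 1) = 0
    linear_combination cQ b (m + 1) * hxpa - cQ a (n + 1) * hxqb
  have hdetabs : ∀ k i, ‖gfn a b k i * gfn a b (k + 1) (i + 1) - gfn a b (k + 1) i * gfn a b k (i + 1)‖ = 1 := by
    intro k i
    rw [gfn_det, norm_mul, absD a k, absD b i]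
    norm_num
  -- separation lemma
  have hsep : ∀ k i, k + 1 ≤ n → i ≤ m →
      ‖gfn a b (k + 2) (i + 1)‖ ≤ 1 / 2 * ‖gfn a b (k + 1) (i + 1)‖ →
      ‖gfn a b (k + 1) i‖ ≤ 1 / 2 * ‖gfn a b k i‖ := by
    intro k i hk hi hp
    apply key_ineq (a (k + 1)) (gfn a b k i) (gfn a b (k + 1) i)
        (gfn a b (k + 1) (i + 1)) (gfn a b (k + 2) (i + 1))
    · exact (ha (k + 1) (by omega) hk).2
    · intro h0; exact one_le_abs_ringInt hd1 (hgmem (k + 1) (by omega) i (by omega)) h0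
    · intro h0; exact one_le_abs_ringInt hd1 (hgmem (k + 1) (by omega) (i + 1) (by omega)) h0
    · exact hp
    · rw [← gfn_rec]
      exact hdetabs (k + 1) i
  -- nesting lemma
  have hnest : ∀ k i, k + 1 ≤ n →
      ‖gfn a b (k + 2) i‖ ≤ 1 / 2 * ‖gfn a b (k + 1) i‖ →
      ‖gfn a b (k + 1) i‖ ≤ 1 / 2 * ‖gfn a b k i‖ := by
    intro k i hk hp
    apply key_ineq2 (a (k + 1)) (gfn a b k i) (gfn a b (k + 1) i)
    · exact (ha (k + 1) (by omega) hk).2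
    · rw [gfn_rec] at hp; exact hp
  -- no vertex of the walk other than infinity is "past" level 0 backwards: base of counting
  have hbase : ∀ k, k ≤ n →
      ¬ (‖gfn a b (k + 1) 0‖ ≤ 1 / 2 * ‖gfn a b k 0‖) := by
    intro k
    induction k with
    | zero =>
      intro _ hp
      have h1 : gfn a b 1 0 = 1 := by simp [gfn, cP, cQ]
      have h0 : gfn a b 0 0 = 0 := by simp [gfn, cP, cQ]
      rw [h1, h0] at hp
      simp at hp
      norm_num at hp
    | succ k IH =>
      intro hk hp
      exact IH (by omega) (hnest k 0 (by omega) hp)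
  -- counting lemma
  have hP5 : ∀ i, i ≤ m + 1 → ∀ k, k ≤ n →
      ‖gfn a b (k + 1) i‖ ≤ 1 / 2 * ‖gfn a b k i‖ → k + 1 ≤ i := by
    intro i
    induction i with
    | zero =>
      intro _ k hk hp
      exact absurd hp (hbase k hk)
    | succ i IH =>
      intro hi k hk hp
      cases k with
      | zero => omega
      | succ k' =>
        have h2 := hsep k' i hk (by omega) hp
        have h3 := IH (by omega) k' (by omega) h2
        omega
  have hPastN : ‖gfn a b (n + 1) (m + 1)‖ ≤ 1 / 2 * ‖gfn a b n (m + 1)‖ := by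
    rw [hg0, norm_zero]
    positivity
  have hnm : n ≤ m := by
    have := hP5 (m + 1) le_rfl n le_rfl hPastN
    omega
  -- equality case
  have hmn : m ≠ n := by
    intro hmn
    have hmn2 : n = m := hmn.symm
    subst hmn2
    have hchain : ∀ r, r ≤ n →
        ‖gfn a b (n - r + 1) (n + 1 - r)‖ ≤ 1 / 2 * ‖gfn a b (n - r) (n + 1 - r)‖ := by
      intro r
      induction r with
      | zero => intro _; simpa using hPastN
      | succ r IH =>
        intro hr
        have hprev := IH (by omega)
        have e1 : n - r = (n - (r + 1)) + 1 := by omega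
        have e2 : n + 1 - r = (n - (r + 1)) + 2 := by omega
        have e3 : n + 1 - (r + 1) = (n - (r + 1)) + 1 := by omega
        rw [e1, e2] at hprev
        rw [e3]
        exact hsep (n - (r + 1)) (n - (r + 1) + 1) (by omega) (by omega) hprev
    have hPastj : ∀ j, j + 1 ≤ n →
        ‖gfn a b (j + 2) (j + 2)‖ ≤ 1 / 2 * ‖gfn a b (j + 1) (j + 2)‖ := by
      intro j hj
      have h := hchain (n - (j + 1)) (by omega)
      have e1 : n - (n - (j + 1)) = j + 1 := by omega
      have e2 : n + 1 - (n - (j + 1)) = j + 2 := by omega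
      rw [e1, e2] at h
      exact h
    have hall : ∀ j, j ≤ n → ∀ i, 1 ≤ i → i ≤ j → b i = a i := by
      intro j
      induction j with
      | zero => intro _ i h1 h2; omega
      | succ j IH =>
        intro hj i h1 h2
        rcases Nat.lt_or_ge i (j + 1) with hlt | hge
        · exact IH (by omega) i h1 (by omega)
        · have hi : i = j + 1 := by omega
          subst hi
          clear h1 h2
          -- prefix equality
          have hpref2 : ∀ i2, i2 ≤ j →
              (cP b i2 = cP a i2 ∧ cQ b i2 = cQ a i2) ∧
              (cP b (i2 + 1) = cP a (i2 + 1) ∧ cQ b (i2 + 1) = cQ a (i2 + 1)) := by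
            intro i2
            induction i2 with
            | zero =>
              intro _
              exact ⟨⟨rfl, rfl⟩, rfl, rfl⟩
            | succ i2 IH2 =>
              intro hi2
              obtain ⟨⟨hp0, hq0⟩, hp1, hq1⟩ := IH2 (by omega)
              have hdig : b (i2 + 1) = a (i2 + 1) := IH (by omega) (i2 + 1) (by omega) (by omega)
              refine ⟨⟨hp1, hq1⟩, ?_, ?_⟩
              · rw [cP_rec, cP_rec, hdig, hp1, hp0]
              · rw [cQ_rec, cQ_rec, hdig, hq1, hq0]
          have hpj : cP b j = cP a j := ((hpref2 j le_rfl).1).1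
          have hqj : cQ b j = cQ a j := ((hpref2 j le_rfl).1).2
          have hpj1 : cP b (j + 1) = cP a (j + 1) := ((hpref2 j le_rfl).2).1
          have hqj1 : cQ b (j + 1) = cQ a (j + 1) := ((hpref2 j le_rfl).2).2
          -- compute the two g-values
          have hgj : gfn a b (j + 1) (j + 2)
              = cP a j * cQ a (j + 1) - cP a (j + 1) * cQ a j := by
            show cQ a (j + 1) * cP b (j + 2) - cP a (j + 1) * cQ b (j + 2) = _
            rw [cP_rec, cQ_rec, hpj1, hqj1, hpj, hqj]
            ring
          have hgj1 : gfn a b (j + 2) (j + 2)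
              = (a (j + 1) - b (j + 1)) * (cP a j * cQ a (j + 1) - cP a (j + 1) * cQ a j) := by
            show cQ a (j + 2) * cP b (j + 2) - cP a (j + 2) * cQ b (j + 2) = _
            rw [cP_rec a j, cQ_rec a j, cP_rec b j, cQ_rec b j, hpj1, hqj1, hpj, hqj]
            ring
          have hPj := hPastj j hj
          rw [hgj, hgj1, norm_mul, absD a j] at hPj
          norm_num at hPj
          -- hPj : abs (a (j+1) - b (j+1)) ≤ 1/2
          by_contra hne2
          have hsub : a (j + 1) - b (j + 1) ∈ ringInt d :=
            ringInt_mem_sub (ha (j + 1) (by omega) hj).1 (hb (j + 1) (by omega) hj)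
          have hsub0 : a (j + 1) - b (j + 1) ≠ 0 := sub_ne_zero.mpr (Ne.symm hne2)
          have := one_le_abs_ringInt hd1 hsub hsub0
          linarith
    exact hne ⟨rfl, fun k h1 h2 => hall n le_rfl k h1 h2⟩
  omega
end
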